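/- Define $F = 1 + 2\cos^2(\pi/3) = 3/2$, $G = 1 + 2\cos(\pi/3) = 2$, $H = 1 + 2/\cos(\pi/3) = 5$, $M = 3$. Then the system $x^6 G + x^2 y^2 H + 2 x^4 y M + y^2 - x^4 = 0$ and $2 x^8 F + 3 x^6 y G - x^2 y^3 H - 2 x^6 - 2 y^3 = 0$, i.e. $2x^6 + 5 x^2 y^2 + 6 x^4 y + y^2 - x^4 = 0$ and $3 x^8 + 6 x^6 y - 5 x^2 y^3 - 2 x^6 - 2 y^3 = 0$, has a solution $(x,y)$ with $x > 0$, $y < 0$, and $-x^2/2 < y$. -/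

import Mathlib

theorem six_gon_system_has_solution :
    ∃ x y : ℝ, 0 < x ∧ y < 0 ∧ -x ^ 2 / 2 < y ∧
      2 * x ^ 6 + 5 * x ^ 2 * y ^ 2 + 6 * x ^ 4 * y + y ^ 2 - x ^ 4 = 0 ∧
      3 * x ^ 8 + 6 * x ^ 6 * y - 5 * x ^ 2 * y ^ 3 - 2 * x ^ 6 - 2 * y ^ 3 = 0 := by
  -- find a root t of 5t⁴+7t³+8t²+5t+1 in (-1/2, 0)
  have hcont : ContinuousOn (fun t : ℝ => 5*t^4+7*t^3+8*t^2+5*t+1)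
      (Set.Icc (-(1/2) : ℝ) 0) := (by continuity : Continuous _).continuousOn
  have hsub := intermediate_value_Icc (by norm_num : (-(1/2) : ℝ) ≤ 0) hcont
  have h0 : (0:ℝ) ∈ (fun t : ℝ => 5*t^4+7*t^3+8*t^2+5*t+1) '' Set.Icc (-(1/2):ℝ) 0 := by
    apply hsub
    constructor <;> norm_num
  obtain ⟨t, htmem, ht⟩ := h0
  simp only at ht
  have ht1 : -(1/2:ℝ) < t := by
    rcases lt_or_eq_of_le htmem.1 with h | h
    · exact h
    · exfalso; rw [← h] at ht; norm_num at ht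
  have ht2 : t < 0 := by
    rcases lt_or_eq_of_le htmem.2 with h | h
    · exact h
    · exfalso; rw [h] at ht; norm_num at ht
  have hD : (0:ℝ) < 3 + 6*t - 5*t^3 := by nlinarith
  have hN : (0:ℝ) < 2 + 2*t^3 := by nlinarith
  set x : ℝ := Real.sqrt ((2 + 2*t^3) / (3 + 6*t - 5*t^3)) with hxdef
  have hxpos : 0 < x := Real.sqrt_pos.mpr (div_pos hN hD)
  have hx2 : x^2 = (2 + 2*t^3) / (3 + 6*t - 5*t^3) :=
    Real.sq_sqrt (le_of_lt (div_pos hN hD))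
  have hDne : (3 + 6*t - 5*t^3) ≠ 0 := ne_of_gt hD
  have hx2' : x^2 * (3 + 6*t - 5*t^3) = 2 + 2*t^3 := by
    rw [hx2]; exact div_mul_cancel₀ _ hDne
  have hx2pos : 0 < x^2 := by positivity
  refine ⟨x, t * x^2, hxpos, ?_, ?_, ?_, ?_⟩
  · exact mul_neg_of_neg_of_pos ht2 hx2pos
  · nlinarith
  · have key : (2 * x^6 + 5 * x^2 * (t*x^2)^2 + 6 * x^4 * (t*x^2) + (t*x^2)^2 - x^4)
        * (3 + 6*t - 5*t^3) = 0 := by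
      linear_combination (x^4*(2+6*t+5*t^2)) * hx2' + (x^4*(1+t)) * ht
    exact (mul_eq_zero.mp key).resolve_right hDne
  · linear_combination x^6 * hx2'
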